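/- For integers $0 \le i \le n$ and $s \ge 0$, $\sum_{k=0}^{n} \frac{(-n)_k (n-i+1)_k}{(k!)^2} \frac{1}{k+s+1} = (-1)^i \frac{(-n)_i\,(-s)_{n-i}}{(s+1)_{n+1}}$. -/

import Mathlib

open Finset

/-- Pochhammer symbol `(x)_k = x (x+1) ⋯ (x+k-1)`. -/
noncomputable def poch (x : ℝ) (k : ℕ) : ℝ := (ascPochhammer ℝ k).eval x

lemma poch_zero (x : ℝ) : poch x 0 = 1 := by simp [poch]

lemma poch_succ (x : ℝ) (k : ℕ) : poch x (k+1) = poch x k * (x + k) := by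
  simp [poch, ascPochhammer_succ_eval]

lemma poch_neg_nat (n : ℕ) : ∀ k, k ≤ n → poch (-(n:ℝ)) k = (-1)^k * (n.factorial : ℝ) / ((n-k).factorial : ℝ) := by
  intro k
  induction k with
  | zero =>
    intro _
    simp only [poch_zero, pow_zero, one_mul, Nat.sub_zero]
    exact (div_self (Nat.cast_ne_zero.2 (Nat.factorial_ne_zero n))).symm
  | succ k ih =>
    intro hk
    have hk' : k ≤ n := by omega
    have hkn : k < n := hk
    have h1 : (n - k : ℕ) = (n - (k+1)) + 1 := by omega
    have h2 : ((n - (k+1) : ℕ) : ℝ) = (n:ℝ) - (k+1) := by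
      rw [Nat.cast_sub hk]; push_cast; ring
    have hnk : ((n:ℝ) - k) ≠ 0 := by
      have : (k:ℝ) < n := by exact_mod_cast hkn
      intro hc; linarith
    have hf1 : ((n - (k+1)).factorial : ℝ) ≠ 0 := Nat.cast_ne_zero.2 (Nat.factorial_ne_zero _)
    have hf2 : ((n - k).factorial : ℝ) ≠ 0 := Nat.cast_ne_zero.2 (Nat.factorial_ne_zero _)
    rw [poch_succ, ih hk']
    have key : (((n - k).factorial : ℕ) : ℝ) = ((n - (k+1)).factorial : ℝ) * ((n:ℝ) - k) := by
      rw [h1, Nat.factorial_succ]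
      push_cast
      rw [h2]
      ring
    rw [key]
    field_simp
    ring

lemma poch_nat_shift (m : ℕ) : ∀ k, poch ((m:ℝ)+1) k = ((m+k).factorial : ℝ) / (m.factorial : ℝ) := by
  intro k
  induction k with
  | zero =>
    simp only [poch_zero, Nat.add_zero]
    exact (div_self (Nat.cast_ne_zero.2 (Nat.factorial_ne_zero m))).symm
  | succ k ih =>
    rw [poch_succ, ih]
    rw [show m + (k+1) = (m+k) + 1 by ring, Nat.factorial_succ]
    have hf : ((m).factorial : ℝ) ≠ 0 := Nat.cast_ne_zero.2 (Nat.factorial_ne_zero _)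
    field_simp
    push_cast
    ring

lemma diff_step (h : ℕ → ℝ) (n : ℕ) :
    ∑ k ∈ range (n+2), (-1:ℝ)^k * ((n+1).choose k : ℝ) * h k
    = ∑ k ∈ range (n+1), (-1:ℝ)^k * (n.choose k : ℝ) * (h k - h (k+1)) := by
  have hG : ∑ k ∈ range (n+1), (-1:ℝ)^k * (n.choose k : ℝ) * h k
      = ∑ k ∈ range n, (-1:ℝ)^(k+1) * (n.choose (k+1) : ℝ) * h (k+1) + h 0 := by
    simpa using Finset.sum_range_succ' (fun k => (-1:ℝ)^k * (n.choose k : ℝ) * h k) n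
  rw [Finset.sum_range_succ' (fun k => (-1:ℝ)^k * ((n+1).choose k : ℝ) * h k) (n+1)]
  simp only [Nat.choose_succ_succ, Nat.cast_add, Nat.choose_zero_right]
  have expand : ∀ k, (-1:ℝ)^(k+1) * ((n.choose k : ℝ) + (n.choose (k+1) : ℝ)) * h (k+1)
      = -((-1:ℝ)^k * (n.choose k : ℝ) * h (k+1)) + (-1:ℝ)^(k+1) * (n.choose (k+1):ℝ) * h (k+1) := by
    intro k; ring
  rw [Finset.sum_congr rfl (fun k _ => expand k), Finset.sum_add_distrib]
  have h2 : ∑ k ∈ range (n+1), (-1:ℝ)^(k+1) * (n.choose (k+1) : ℝ) * h (k+1)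
      = ∑ k ∈ range n, (-1:ℝ)^(k+1) * (n.choose (k+1) : ℝ) * h (k+1) := by
    rw [Finset.sum_range_succ]
    simp [Nat.choose_succ_self]
  rw [h2]
  have h3 : ∑ k ∈ range n, (-1:ℝ)^(k+1) * (n.choose (k+1) : ℝ) * h (k+1)
      = (∑ k ∈ range (n+1), (-1:ℝ)^k * (n.choose k : ℝ) * h k) - h 0 := by
    linarith [hG]
  rw [h3]
  simp only [mul_sub, Finset.sum_sub_distrib, Finset.sum_neg_distrib]
  ring

lemma alt_nil (n : ℕ) (hn : 0 < n) : ∑ k ∈ range (n+1), (-1:ℝ)^k * (n.choose k : ℝ) = 0 := by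
  have h0 := @Int.alternating_sum_range_choose n
  rw [if_neg (by omega)] at h0
  have : ((∑ m ∈ range (n + 1), (-1:ℤ) ^ m * (n.choose m : ℤ) : ℤ) : ℝ) = 0 := by
    rw [h0]; norm_num
  push_cast at this
  convert this using 2

lemma alt_choose (m : ℕ) : ∀ n j : ℕ, m < n →
    ∑ k ∈ range (n+1), (-1:ℝ)^k * (n.choose k : ℝ) * ((m + k + j).choose m : ℝ) = 0 := by
  induction m with
  | zero =>
    intro n j hn
    simp only [Nat.choose_zero_right, Nat.cast_one, mul_one]
    exact alt_nil n hn
  | succ m ih =>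
    intro n j hn
    obtain ⟨n', rfl⟩ : ∃ n', n = n' + 1 := ⟨n - 1, by omega⟩
    rw [show n' + 1 + 1 = n' + 2 from rfl] at *
    rw [diff_step (fun k => ((m + 1 + k + j).choose (m+1) : ℝ)) n']
    have key : ∀ k, (((m + 1 + k + j).choose (m+1) : ℝ)) - (((m + 1 + (k+1) + j).choose (m+1)) : ℝ)
        = -(((m + k + (j+1)).choose m : ℝ)) := by
      intro k
      have : (m + 1 + (k+1) + j).choose (m+1) = (m + 1 + k + j).choose m + (m + 1 + k + j).choose (m+1) := by
        rw [show m + 1 + (k+1) + j = (m + 1 + k + j) + 1 by ring, Nat.choose_succ_succ]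
      rw [this]
      push_cast
      rw [show m + 1 + k + j = m + k + (j+1) by ring]
      ring
    calc ∑ k ∈ range (n'+1), (-1:ℝ)^k * (n'.choose k : ℝ) *
          ((fun k => (((m + 1 + k + j).choose (m+1) : ℝ))) k - (fun k => (((m + 1 + k + j).choose (m+1) : ℝ))) (k+1))
        = ∑ k ∈ range (n'+1), -((-1:ℝ)^k * (n'.choose k : ℝ) * ((m + k + (j+1)).choose m : ℝ)) := by
          apply Finset.sum_congr rfl
          intro k _
          simp only
          rw [key k]
          ring
      _ = -∑ k ∈ range (n'+1), (-1:ℝ)^k * (n'.choose k : ℝ) * ((m + k + (j+1)).choose m : ℝ) := by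
          rw [Finset.sum_neg_distrib]
      _ = 0 := by rw [ih n' (j+1) (by omega)]; ring

lemma base_sum (n : ℕ) : ∀ s : ℕ, ∑ k ∈ range (n+1), (-1:ℝ)^k * (n.choose k : ℝ) * (1 / ((k:ℝ) + s + 1))
    = (n.factorial : ℝ) * (s.factorial : ℝ) / ((n + s + 1).factorial : ℝ) := by
  induction n with
  | zero =>
    intro s
    have : ((s:ℝ) + 1) ≠ 0 := by positivity
    simp [Nat.factorial]
    field_simp
  | succ n ih =>
    intro s
    rw [show n + 1 + 1 = n + 2 from rfl, diff_step (fun k => 1 / ((k:ℝ) + s + 1)) n]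
    simp only [mul_sub, Finset.sum_sub_distrib]
    have h2 : ∑ k ∈ range (n+1), (-1:ℝ)^k * (n.choose k : ℝ) * (1 / ((↑(k+1):ℝ) + ↑s + 1))
        = ∑ k ∈ range (n+1), (-1:ℝ)^k * (n.choose k : ℝ) * (1 / ((k:ℝ) + ↑(s+1) + 1)) := by
      apply Finset.sum_congr rfl; intro k _; push_cast; ring_nf
    rw [h2, ih s, ih (s+1)]
    have h1 : (n + (s+1) + 1) = (n + s + 1) + 1 := by ring
    have h3 : (n + 1 + s + 1) = (n + s + 1) + 1 := by ring
    rw [h1, h3, Nat.factorial_succ (n+s+1), Nat.factorial_succ n, Nat.factorial_succ s]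
    have c1 : ((n+s+1).factorial : ℝ) ≠ 0 := Nat.cast_ne_zero.2 (Nat.factorial_ne_zero _)
    have c2 : ((s).factorial : ℝ) ≠ 0 := Nat.cast_ne_zero.2 (Nat.factorial_ne_zero _)
    field_simp
    push_cast
    ring

noncomputable def T (n m s : ℕ) : ℝ :=
  ∑ k ∈ range (n+1), (-1:ℝ)^k * (n.choose k : ℝ) * (((m+k).choose m : ℝ)) * (1/((k:ℝ)+s+1))

lemma choose_ratio (m k : ℕ) :
    ((m+1+k).choose (m+1) : ℝ) = ((m+k).choose m : ℝ) * ((m:ℝ)+k+1) / ((m:ℝ)+1) := by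
  have h := Nat.add_one_mul_choose_eq (m+k) m
  have h' : ((m+k+1) * (m+k).choose m : ℕ) = ((m+k+1).choose (m+1)) * (m+1) := h
  have hcast : ((m+k+1:ℕ):ℝ) * ((m+k).choose m : ℝ) = ((m+k+1).choose (m+1) : ℝ) * ((m+1:ℕ):ℝ) := by
    exact_mod_cast congrArg (Nat.cast : ℕ → ℝ) h'
  have hm : ((m:ℝ)+1) ≠ 0 := by positivity
  have : (m+1+k) = (m+k+1) := by omega
  rw [this]
  push_cast at hcast ⊢
  field_simp
  linarith [hcast]

lemma T_succ (n m s : ℕ) (h : m < n) : T n (m+1) s = (((m:ℝ) - s)/((m:ℝ)+1)) * T n m s := by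
  have hz := alt_choose m n 0 h
  simp only [add_zero] at hz
  have hm : ((m:ℝ)+1) ≠ 0 := by positivity
  unfold T
  have step : ∀ k ∈ range (n+1), (-1:ℝ)^k * (n.choose k : ℝ) * (((m+1+k).choose (m+1) : ℝ)) * (1/((k:ℝ)+s+1))
      = (1/((m:ℝ)+1)) * ((-1:ℝ)^k * (n.choose k : ℝ) * ((m+k).choose m : ℝ))
        + (((m:ℝ)-s)/((m:ℝ)+1)) * ((-1:ℝ)^k * (n.choose k : ℝ) * (((m+k).choose m : ℝ)) * (1/((k:ℝ)+s+1))) := by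
    intro k _
    rw [choose_ratio m k]
    have hk : ((k:ℝ)+s+1) ≠ 0 := by positivity
    field_simp
    ring
  rw [Finset.sum_congr rfl step, Finset.sum_add_distrib, ← Finset.mul_sum, ← Finset.mul_sum, hz]
  ring

lemma T_closed (n s : ℕ) : ∀ m, m ≤ n →
    T n m s = poch (-(s:ℝ)) m / (m.factorial : ℝ)
      * ((n.factorial : ℝ) * (s.factorial : ℝ) / ((n + s + 1).factorial : ℝ)) := by
  intro m
  induction m with
  | zero =>
    intro _
    have : T n 0 s = ∑ k ∈ range (n+1), (-1:ℝ)^k * (n.choose k : ℝ) * (1 / ((k:ℝ) + s + 1)) := by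
      unfold T
      apply Finset.sum_congr rfl
      intro k _
      simp [Nat.choose_zero_right]
    rw [this, base_sum n s, poch_zero]
    simp
  | succ m ih =>
    intro hm
    have hm' : m < n := by omega
    rw [T_succ n m s hm', ih (by omega), poch_succ]
    have hfs : (((m+1).factorial : ℕ) : ℝ) = ((m:ℝ)+1) * (m.factorial : ℝ) := by
      rw [Nat.factorial_succ]; push_cast; ring
    rw [hfs]
    have c1 : ((m).factorial : ℝ) ≠ 0 := Nat.cast_ne_zero.2 (Nat.factorial_ne_zero _)
    have c2 : ((m:ℝ)+1) ≠ 0 := by positivity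
    field_simp
    ring

theorem stmt_11 (n i s : ℕ) (hi : i ≤ n) :
    ∑ k ∈ Finset.range (n + 1),
      poch (-(n : ℝ)) k * poch ((n : ℝ) - i + 1) k / ((k.factorial : ℝ)) ^ 2
        * (1 / ((k : ℝ) + s + 1))
    = (-1) ^ i * poch (-(n : ℝ)) i * poch (-(s : ℝ)) (n - i) /
        poch ((s : ℝ) + 1) (n + 1) := by
  set m := n - i with hmdef
  have hm : m ≤ n := Nat.sub_le n i
  have hcast : ((m:ℕ):ℝ) = (n:ℝ) - i := by
    rw [hmdef, Nat.cast_sub hi]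
  have lhs_eq : ∑ k ∈ Finset.range (n + 1),
      poch (-(n : ℝ)) k * poch ((n : ℝ) - i + 1) k / ((k.factorial : ℝ)) ^ 2
        * (1 / ((k : ℝ) + s + 1)) = T n m s := by
    unfold T
    apply Finset.sum_congr rfl
    intro k hk
    have hk' : k ≤ n := by
      have := Finset.mem_range.mp hk; omega
    rw [show (n:ℝ) - i + 1 = ((m:ℕ):ℝ) + 1 by rw [hcast], poch_nat_shift m k,
      poch_neg_nat n k hk']
    rw [Nat.cast_choose ℝ hk', Nat.cast_choose ℝ (Nat.le_add_right m k)]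
    have hsub : (m + k) - m = k := by omega
    rw [hsub]
    have c1 : ((k).factorial : ℝ) ≠ 0 := Nat.cast_ne_zero.2 (Nat.factorial_ne_zero _)
    have c2 : ((n-k).factorial : ℝ) ≠ 0 := Nat.cast_ne_zero.2 (Nat.factorial_ne_zero _)
    have c3 : ((m).factorial : ℝ) ≠ 0 := Nat.cast_ne_zero.2 (Nat.factorial_ne_zero _)
    have c5 : ((k:ℝ)+(s:ℝ)+1) ≠ 0 := by positivity
    field_simp
  rw [lhs_eq, T_closed n s m hm]
  rw [poch_neg_nat n i hi, show (s:ℝ) + 1 = ((s:ℕ):ℝ) + 1 from rfl, poch_nat_shift s (n+1)]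
  have e1 : s + (n+1) = n + s + 1 := by ring
  rw [e1]
  have c1 : ((s).factorial : ℝ) ≠ 0 := Nat.cast_ne_zero.2 (Nat.factorial_ne_zero _)
  have c2 : ((m).factorial : ℝ) ≠ 0 := Nat.cast_ne_zero.2 (Nat.factorial_ne_zero _)
  have c3 : ((n+s+1).factorial : ℝ) ≠ 0 := Nat.cast_ne_zero.2 (Nat.factorial_ne_zero _)
  have c4 : ((n-i).factorial : ℝ) ≠ 0 := Nat.cast_ne_zero.2 (Nat.factorial_ne_zero _)
  have hsq : (-1:ℝ)^i * (-1:ℝ)^i = 1 := by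
    rw [← pow_add, ← two_mul, pow_mul]; norm_num
  have collapse : (-1:ℝ)^i * ((-1:ℝ)^i * (n.factorial:ℝ) / ((n-i).factorial:ℝ))
      = (n.factorial:ℝ) / ((n-i).factorial:ℝ) := by
    rw [← mul_div_assoc, ← mul_assoc, hsq, one_mul]
  rw [collapse]
  field_simp
  ring
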